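/- arXiv:2505.11788 — 3 statements merged into one kernel-verified Lean document; each statement's English description precedes it below -/
import Mathlib

section
/- Speculative decoding is unbiased: let x and y be probability distributions on a finite vocabulary V with x_v > 0 for all v, define the rejection probability β_v = max(1 - y_v/x_v, 0) and the resampling distribution p_v = max(y_v - x_v,0) / Σ_i max(y_i - x_i,0) (assuming the normalizer is positive). Then for every v, x_v·(1 - β_v) + (Σ_i x_i·β_i)·p_v = y_v. -/
theorem stmt_1 {V : Type*} [Fintype V] (x y : V → ℝ)
    (hx : ∀ v, 0 < x v) (hy : ∀ v, 0 ≤ y v)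
    (hx1 : ∑ v, x v = 1) (hy1 : ∑ v, y v = 1)
    (hZ : 0 < ∑ i, max (y i - x i) 0) :
    ∀ v, x v * (1 - max (1 - y v / x v) 0)
        + (∑ i, x i * max (1 - y i / x i) 0)
          * (max (y v - x v) 0 / ∑ i, max (y i - x i) 0) = y v := by
  have key : ∀ i, x i * max (1 - y i / x i) 0 = max (x i - y i) 0 := by
    intro i
    rcases le_or_gt (y i) (x i) with h | h
    · have h1 : y i / x i ≤ 1 := (div_le_one (hx i)).2 h
      rw [max_eq_left (by linarith), max_eq_left (by linarith)]
      field_simp [(hx i).ne']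
    · rw [max_eq_right, max_eq_right (by linarith)]
      · ring
      · have := (one_le_div (hx i)).2 h.le
        linarith
  have hsum : (∑ i, x i * max (1 - y i / x i) 0) = ∑ i, max (y i - x i) 0 := by
    simp only [key]
    have : (∑ i, max (x i - y i) 0) - (∑ i, max (y i - x i) 0)
        = ∑ i, (x i - y i) := by
      rw [← Finset.sum_sub_distrib]
      congr 1; ext i
      rcases le_total (x i) (y i) with h | h <;>
        simp [max_eq_left, max_eq_right, *] <;> linarith
    rw [Finset.sum_sub_distrib, hx1, hy1] at this
    linarith
  intro v
  have hc : (∑ i, max (y i - x i) 0) * (max (y v - x v) 0 / ∑ i, max (y i - x i) 0)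
      = max (y v - x v) 0 := by
    field_simp [(hx v).ne']
  rw [hsum, hc]
  rcases le_total (x v) (y v) with h | h
  · have h1 : 1 ≤ y v / x v := (one_le_div (hx v)).2 h
    rw [max_eq_right (by linarith : (1 : ℝ) - y v / x v ≤ 0),
      max_eq_left (by linarith : (0 : ℝ) ≤ y v - x v)]
    ring
  · have h1 : y v / x v ≤ 1 := (div_le_one (hx v)).2 h
    rw [max_eq_left (by linarith : (0 : ℝ) ≤ 1 - y v / x v),
      max_eq_right (by linarith : y v - x v ≤ 0)]
    field_simp [(hx v).ne']
    ring
end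

section
/- Proposition 1 (upper bound on TVD of resampling distributions): Let x, x̂, y be probability distributions on a finite vocabulary V with D_TV(x,y) > 0 and Σ_i max(y_i - x̂_i, 0) > 0. Define p_v = max(y_v - x_v,0)/Σ_i max(y_i - x_i,0) and q_v = max(y_v - x̂_v,0)/Σ_i max(y_i - x̂_i,0). Then D_TV(p, q) ≤ (Σ_v |x_v - x̂_v|) / D_TV(x, y). -/
theorem stmt_6 {V : Type*} [Fintype V] (x xhat y : V → ℝ)
    (hx : ∀ v, 0 ≤ x v) (hxhat : ∀ v, 0 ≤ xhat v) (hy : ∀ v, 0 ≤ y v)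
    (hx1 : ∑ v, x v = 1) (hxhat1 : ∑ v, xhat v = 1) (hy1 : ∑ v, y v = 1)
    (hD : 0 < (1 / 2) * ∑ v, |x v - y v|)
    (hZ : 0 < ∑ i, max (y i - xhat i) 0) :
    (1 / 2) * ∑ v, |(max (y v - x v) 0 / ∑ i, max (y i - x i) 0)
        - (max (y v - xhat v) 0 / ∑ i, max (y i - xhat i) 0)| ≤
      (∑ v, |x v - xhat v|) / ((1 / 2) * ∑ v, |x v - y v|) := by
  set Z := ∑ i, max (y i - x i) 0 with hZdef
  set W := ∑ i, max (y i - xhat i) 0 with hWdef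
  set S := ∑ v, |x v - xhat v| with hSdef
  have hhalf : ∀ a : ℝ, max a 0 = (a + |a|) / 2 := by
    intro a
    rcases le_or_gt 0 a with h | h
    · rw [max_eq_left h, abs_of_nonneg h]; ring
    · rw [max_eq_right h.le, abs_of_neg h]; ring
  have hZeq : Z = (1 / 2) * ∑ v, |x v - y v| := by
    have h1 : ∀ v : V, |x v - y v| = |y v - x v| := fun v => abs_sub_comm _ _
    calc Z = ∑ v, ((y v - x v) + |y v - x v|) / 2 := by
            rw [hZdef]; exact Finset.sum_congr rfl fun v _ => hhalf _
    _ = ((∑ v, (y v - x v)) + ∑ v, |y v - x v|) / 2 := by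
            rw [← Finset.sum_div, Finset.sum_add_distrib]
    _ = (1 / 2) * ∑ v, |x v - y v| := by
            rw [Finset.sum_sub_distrib, hx1, hy1]
            simp_rw [h1]; ring
  have hZpos : 0 < Z := by rw [hZeq]; exact hD
  have hterm : ∀ v, |max (y v - x v) 0 / Z - max (y v - xhat v) 0 / W|
      ≤ |max (y v - x v) 0 - max (y v - xhat v) 0| / Z
        + max (y v - xhat v) 0 * |Z - W| / (Z * W) := by
    intro v
    set a := max (y v - x v) 0
    set b := max (y v - xhat v) 0
    have hb : (0:ℝ) ≤ b := le_max_right _ _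
    have h1 : a / Z - b / W = (a - b) / Z + b * (W - Z) / (Z * W) := by
      field_simp; ring
    rw [h1]
    calc |(a - b) / Z + b * (W - Z) / (Z * W)|
        ≤ |(a - b) / Z| + |b * (W - Z) / (Z * W)| := abs_add_le _ _
    _ = |a - b| / Z + b * |Z - W| / (Z * W) := by
        rw [abs_div, abs_div, abs_mul, abs_of_pos hZpos,
          abs_of_pos (mul_pos hZpos hZ), abs_of_nonneg hb, abs_sub_comm Z W]
  have hab : ∀ v, |max (y v - x v) 0 - max (y v - xhat v) 0| ≤ |x v - xhat v| := by
    intro v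
    have h2 : (y v - x v) - (y v - xhat v) = xhat v - x v := by ring
    calc |max (y v - x v) 0 - max (y v - xhat v) 0|
        ≤ |(y v - x v) - (y v - xhat v)| := abs_max_sub_max_le_abs _ _ _
    _ = |x v - xhat v| := by rw [h2, abs_sub_comm]
  have hZW : |Z - W| ≤ S := by
    calc |Z - W| = |∑ v, (max (y v - x v) 0 - max (y v - xhat v) 0)| := by
          rw [Finset.sum_sub_distrib]
    _ ≤ ∑ v, |max (y v - x v) 0 - max (y v - xhat v) 0| :=
          Finset.abs_sum_le_sum_abs _ _
    _ ≤ S := Finset.sum_le_sum fun v _ => hab v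
  have hS_nonneg : 0 ≤ S := Finset.sum_nonneg fun v _ => abs_nonneg _
  have hsum : ∑ v, |max (y v - x v) 0 / Z - max (y v - xhat v) 0 / W|
      ≤ S / Z + S / Z := by
    calc ∑ v, |max (y v - x v) 0 / Z - max (y v - xhat v) 0 / W|
        ≤ ∑ v, (|max (y v - x v) 0 - max (y v - xhat v) 0| / Z
            + max (y v - xhat v) 0 * |Z - W| / (Z * W)) :=
          Finset.sum_le_sum fun v _ => hterm v
    _ = (∑ v, |max (y v - x v) 0 - max (y v - xhat v) 0|) / Z
            + (∑ v, max (y v - xhat v) 0) * |Z - W| / (Z * W) := by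
          rw [Finset.sum_add_distrib, ← Finset.sum_div]
          simp_rw [mul_div_assoc]
          rw [← Finset.sum_mul]
    _ ≤ S / Z + W * |Z - W| / (Z * W) := by
          gcongr
          exact Finset.sum_le_sum fun v _ => hab v
    _ = S / Z + |Z - W| / Z := by
          rw [mul_comm Z W, mul_div_mul_left _ _ (ne_of_gt hZ)]
    _ ≤ S / Z + S / Z := by gcongr
  rw [← hZeq]
  linarith
end

section
/- Proposition 2 (approximated upper bound): with x, x̂, y probability distributions on finite V, x_v, y_v > 0 for all v, d ∈ V, β_d = max(1 − y_d/x_d, 0), η > 0 and ℓ(z) = ln(1+e^{ηz})/η, define Û = (Σ_{v∉S} |x_v − x̂_v|) / (Σ_v x_v·ℓ(y_v/x_v − 1)) where S ⊆ V with x_v = x̂_v on S. If x_d < 1 then Û < (Σ_{v∉S} |x_v − x̂_v|) / ((1 − x_d)·ℓ(−1) + x_d·ℓ(−β_d)). -/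
theorem stmt_16 {V : Type*} [Fintype V] [DecidableEq V]
    (hV : 2 ≤ Fintype.card V)
    (x xhat y : V → ℝ) (d : V) (S : Finset V)
    (hx : ∀ v, 0 < x v) (hy : ∀ v, 0 < y v) (hxhat : ∀ v, 0 ≤ xhat v)
    (hx1 : ∑ v, x v = 1) (hxhat1 : ∑ v, xhat v = 1) (hy1 : ∑ v, y v = 1)
    (hagree : ∀ v ∈ S, x v = xhat v)
    (hxd : x d < 1)
    (hnum : 0 < ∑ v ∈ Sᶜ, |x v - xhat v|)
    (η : ℝ) (hη : 0 < η) :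
    (∑ v ∈ Sᶜ, |x v - xhat v|) /
        (∑ v, x v * (Real.log (1 + Real.exp (η * (y v / x v - 1))) / η)) <
      (∑ v ∈ Sᶜ, |x v - xhat v|) /
        ((1 - x d) * (Real.log (1 + Real.exp (η * (-1))) / η)
          + x d * (Real.log (1 + Real.exp (η * (-(max (1 - y d / x d) 0)))) / η)) := by
  have hLpos : ∀ z : ℝ, 0 < Real.log (1 + Real.exp (η * z)) / η := by
    intro z
    apply div_pos _ hη
    apply Real.log_pos
    have := Real.exp_pos (η * z)
    linarith
  have hLmono : ∀ a b : ℝ, a ≤ b →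
      Real.log (1 + Real.exp (η * a)) / η ≤ Real.log (1 + Real.exp (η * b)) / η := by
    intro a b hab
    apply div_le_div_of_nonneg_right _ hη.le
    apply Real.log_le_log (by positivity)
    have : Real.exp (η * a) ≤ Real.exp (η * b) :=
      Real.exp_le_exp.mpr (by nlinarith)
    linarith
  have hLstrict : ∀ a b : ℝ, a < b →
      Real.log (1 + Real.exp (η * a)) / η < Real.log (1 + Real.exp (η * b)) / η := by
    intro a b hab
    have h1 : Real.log (1 + Real.exp (η * a)) < Real.log (1 + Real.exp (η * b)) := by
      apply Real.log_lt_log (by positivity)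
      have : Real.exp (η * a) < Real.exp (η * b) :=
        Real.exp_lt_exp.mpr (mul_lt_mul_of_pos_left hab hη)
      linarith
    rw [div_lt_div_iff₀ hη hη]
    nlinarith
  set βd : ℝ := max (1 - y d / x d) 0 with hβ
  -- denominators
  set Dbig : ℝ := ∑ v, x v * (Real.log (1 + Real.exp (η * (y v / x v - 1))) / η) with hDbig
  set Dsmall : ℝ := (1 - x d) * (Real.log (1 + Real.exp (η * (-1))) / η)
      + x d * (Real.log (1 + Real.exp (η * (-βd))) / η) with hDsmall
  have hxd0 : 0 < x d := hx d
  have hDsmall_pos : 0 < Dsmall := by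
    have h1 := hLpos (-1)
    have h2 := hLpos (-βd)
    have : 0 < 1 - x d := by linarith
    positivity
  have hsum_erase : ∑ v ∈ Finset.univ.erase d, x v = 1 - x d := by
    have := Finset.add_sum_erase Finset.univ x (Finset.mem_univ d)
    rw [hx1] at this
    linarith
  have hne : (Finset.univ.erase d).Nonempty := by
    rw [← Finset.card_pos, Finset.card_erase_of_mem (Finset.mem_univ d),
      Finset.card_univ]
    omega
  have hlt : Dsmall < Dbig := by
    have hsplit : Dbig = x d * (Real.log (1 + Real.exp (η * (y d / x d - 1))) / η)
        + ∑ v ∈ Finset.univ.erase d, x v * (Real.log (1 + Real.exp (η * (y v / x v - 1))) / η) :=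
      (Finset.add_sum_erase Finset.univ _ (Finset.mem_univ d)).symm
    have hd : x d * (Real.log (1 + Real.exp (η * (-βd))) / η)
        ≤ x d * (Real.log (1 + Real.exp (η * (y d / x d - 1))) / η) := by
      apply mul_le_mul_of_nonneg_left _ hxd0.le
      apply hLmono
      have : -βd = min (y d / x d - 1) 0 := by
        rw [hβ]
        rcases le_total (y d / x d - 1) 0 with h | h
        · rw [min_eq_left h, max_eq_left (by linarith)]; ring
        · rw [min_eq_right h, max_eq_right (by linarith)]; ring
      rw [this]
      exact min_le_left _ _
    have hrest : (1 - x d) * (Real.log (1 + Real.exp (η * (-1))) / η)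
        < ∑ v ∈ Finset.univ.erase d, x v * (Real.log (1 + Real.exp (η * (y v / x v - 1))) / η) := by
      have : (1 - x d) * (Real.log (1 + Real.exp (η * (-1))) / η)
          = ∑ v ∈ Finset.univ.erase d, x v * (Real.log (1 + Real.exp (η * (-1))) / η) := by
        rw [← Finset.sum_mul, hsum_erase]
      rw [this]
      apply Finset.sum_lt_sum_of_nonempty hne
      intro v _
      apply mul_lt_mul_of_pos_left _ (hx v)
      apply hLstrict
      have : 0 < y v / x v := div_pos (hy v) (hx v)
      linarith
    rw [hsplit, hDsmall]
    linarith
  exact div_lt_div_of_pos_left hnum hDsmall_pos hlt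
end
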